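/- Let d ≥ 2, let D = D(M) be a conic domain, let p ∈ (1, ∞), θ, Θ ∈ ℝ and m ∈ ℕ. Then there exists a constant N ≥ 1, depending only on d, p, m, θ, Θ and M, such that for every function f that is m times continuously differentiable on D, N^{−1} ‖f‖_{K^m_{p,θ,Θ}(D)} ≤ Σ_{k=0}^{m} ( ∫_D (ρ(x)^k ‖D^k( ρ∘^{(θ−Θ)/p} f )(x)‖)^p ρ(x)^{Θ−d} dx )^{1/p} ≤ N ‖f‖_{K^m_{p,θ,Θ}(D)}. In other words, f has finite K^m_{p,θ,Θ}(D)-norm if and only if ρ∘^{(θ−Θ)/p} f has finite weighted norm Σ_{k≤m} (∫_D (ρ^k ‖D^k(·)‖)^p ρ^{Θ−d} dx)^{1/p}, with two-sided equivalence of the norms. -/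

import Mathlib

open MeasureTheory ENNReal

/-- The conic domain `D(M) = {x ∈ ℝ^d \ {0} : x/|x| ∈ M}` determined by a subset `M` of
the unit sphere `S^(d−1)`. -/
def conicDomain (d : ℕ) (M : Set (EuclideanSpace ℝ (Fin d))) :
    Set (EuclideanSpace ℝ (Fin d)) :=
  {x | x ≠ 0 ∧ ‖x‖⁻¹ • x ∈ M}

/-- `ρ(x) = dist(x, ∂D)`, the distance to the boundary of `D`. -/
noncomputable def bdist (d : ℕ) (D : Set (EuclideanSpace ℝ (Fin d)))
    (x : EuclideanSpace ℝ (Fin d)) : ℝ :=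
  Metric.infDist x (frontier D)

/-- The weighted Sobolev norm
`‖f‖_{K^m_{p,θ,Θ}(D)} = Σ_{k=0}^m (∫_D (ρ^k ‖D^k f‖)^p ρ∘^(θ−Θ) ρ^(Θ−d) dx)^(1/p)`,
valued in `[0,∞]`, where `ρ∘(x) = |x|` and `ρ(x) = dist(x, ∂D)`. -/
noncomputable def Knorm (d : ℕ) (D : Set (EuclideanSpace ℝ (Fin d))) (p θ Θ : ℝ) (m : ℕ)
    (f : EuclideanSpace ℝ (Fin d) → ℝ) : ℝ≥0∞ :=
  ∑ k ∈ Finset.range (m + 1),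
    (∫⁻ x in D,
        ENNReal.ofReal
          ((bdist d D x ^ k * ‖iteratedFDerivWithin ℝ k f D x‖) ^ p *
            (‖x‖ ^ (θ - Θ) * bdist d D x ^ (Θ - (d : ℝ))))) ^ (1 / p)

open Metric Set Finset

variable {d : ℕ}

lemma normRpow_contDiffAt (β : ℝ) {x : EuclideanSpace ℝ (Fin d)} (hx : x ≠ 0) {n : WithTop ℕ∞} :
    ContDiffAt ℝ n (fun y : EuclideanSpace ℝ (Fin d) => ‖y‖ ^ β) x :=
  (contDiffAt_norm ℝ hx).rpow_const_of_ne (norm_ne_zero_iff.2 hx)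

lemma normRpow_deriv_bound (d : ℕ) (β : ℝ) (i : ℕ) :
    ∃ K : ℝ, 0 ≤ K ∧ ∀ x : EuclideanSpace ℝ (Fin d), x ≠ 0 →
      ‖iteratedFDeriv ℝ i (fun y : EuclideanSpace ℝ (Fin d) => ‖y‖ ^ β) x‖
        ≤ K * ‖x‖ ^ (β - i) := by
  classical
  set E := EuclideanSpace ℝ (Fin d)
  set h : E → ℝ := fun y => ‖y‖ ^ β with hh
  have hs₀ : IsOpen {y : E | y ≠ 0} := isOpen_compl_singleton
  have hcd : ∀ {n : WithTop ℕ∞}, ContDiffOn ℝ n h {y : E | y ≠ 0} := fun {n} y hy =>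
    (normRpow_contDiffAt β hy).contDiffWithinAt
  -- continuity of the i-th derivative on the punctured space
  have hcont : ContinuousOn (fun y => iteratedFDeriv ℝ i h y) {y : E | y ≠ 0} := by
    have := (hcd (n := (i : ℕ∞))).continuousOn_iteratedFDerivWithin
      (m := i) (by exact_mod_cast le_refl _) hs₀.uniqueDiffOn
    exact this.congr fun y hy => (iteratedFDerivWithin_of_isOpen i hs₀ hy).symm
  obtain ⟨C, hC⟩ := (isCompact_sphere (0 : E) 1).exists_bound_of_continuousOn
    (hcont.mono (fun y (hy : y ∈ sphere (0 : E) 1) => by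
      rw [mem_sphere_zero_iff_norm] at hy
      intro h0; rw [h0] at hy; simp at hy))
  refine ⟨max C 0, le_max_right _ _, fun x hx => ?_⟩
  set c : ℝ := ‖x‖ with hcdef
  have hc : 0 < c := norm_pos_iff.2 hx
  set e₁ : E ≃L[ℝ] E :=
    (LinearEquiv.smulOfNeZero ℝ E c⁻¹ (inv_ne_zero hc.ne')).toContinuousLinearEquiv with he₁
  have he₁app : ∀ y : E, e₁ y = c⁻¹ • y := fun y => rfl
  have hpre : (e₁ : E → E) ⁻¹' {y : E | y ≠ 0} = {y : E | y ≠ 0} := by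
    ext y
    simp only [Set.mem_preimage, Set.mem_setOf_eq, he₁app, smul_ne_zero_iff,
      ne_eq, inv_eq_zero]
    constructor
    · rintro ⟨-, h⟩; exact h
    · intro h; exact ⟨hc.ne', h⟩
  have hx0 : x ∈ {y : E | y ≠ 0} := hx
  have he₁x : e₁ x ∈ {y : E | y ≠ 0} := by
    rw [← hpre] at hx0; exact hx0
  have hfun : h = (c ^ β : ℝ) • (h ∘ e₁) := by
    funext y
    simp only [Pi.smul_apply, Function.comp_apply, he₁app, smul_eq_mul, hh]
    rw [norm_smul, norm_inv, Real.norm_eq_abs, abs_of_pos hc,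
      Real.mul_rpow (by positivity) (norm_nonneg y), ← mul_assoc,
      ← Real.mul_rpow hc.le (by positivity),
      show c * c⁻¹ = 1 from mul_inv_cancel₀ hc.ne', Real.one_rpow, one_mul]
  have hcomp : ContDiffOn ℝ (i : ℕ∞) (h ∘ e₁) {y : E | y ≠ 0} := by
    refine ContDiffOn.comp (hcd (n := (i : ℕ∞))) ((e₁ : E →L[ℝ] E).contDiff.contDiffOn) ?_
    intro y hy
    have : y ∈ (e₁ : E → E) ⁻¹' {y : E | y ≠ 0} := by rw [hpre]; exact hy
    exact this
  have key : iteratedFDeriv ℝ i h x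
      = (c ^ β : ℝ) • (iteratedFDerivWithin ℝ i h {y : E | y ≠ 0}
          (e₁ x)).compContinuousLinearMap (fun _ => (e₁ : E →L[ℝ] E)) := by
    rw [← iteratedFDerivWithin_of_isOpen i hs₀ hx0]
    conv_lhs => rw [hfun]
    rw [iteratedFDerivWithin_const_smul_apply (hcomp x hx0) hs₀.uniqueDiffOn hx0]
    congr 1
    have := ContinuousLinearEquiv.iteratedFDerivWithin_comp_right e₁ h hs₀.uniqueDiffOn he₁x i
    rw [hpre] at this
    exact this
  have hnorm_e : ‖(e₁ : E →L[ℝ] E)‖ ≤ c⁻¹ := by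
    refine ContinuousLinearMap.opNorm_le_bound _ (by positivity) fun y => ?_
    rw [show (e₁ : E →L[ℝ] E) y = c⁻¹ • y from rfl, norm_smul, norm_inv, norm_norm]
  have hu1 : e₁ x ∈ sphere (0 : E) 1 := by
    simp only [mem_sphere_iff_norm, mem_sphere_zero_iff_norm, sub_zero, he₁app, norm_smul, norm_inv]
    rw [Real.norm_eq_abs, abs_of_pos hc]
    exact inv_mul_cancel₀ hc.ne'
  have hboundC : ‖iteratedFDerivWithin ℝ i h {y : E | y ≠ 0} (e₁ x)‖ ≤ max C 0 := by
    rw [iteratedFDerivWithin_of_isOpen i hs₀ he₁x]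
    exact le_max_of_le_left (hC _ hu1)
  calc ‖iteratedFDeriv ℝ i h x‖
      = |c ^ β| * ‖(iteratedFDerivWithin ℝ i h {y : E | y ≠ 0}
          (e₁ x)).compContinuousLinearMap (fun _ => (e₁ : E →L[ℝ] E))‖ := by
        rw [key, norm_smul, Real.norm_eq_abs]
    _ ≤ c ^ β * (max C 0 * (c⁻¹) ^ i) := by
        rw [abs_of_nonneg (Real.rpow_nonneg hc.le β)]
        refine mul_le_mul_of_nonneg_left ?_ (Real.rpow_nonneg hc.le β)
        refine le_trans (ContinuousMultilinearMap.norm_compContinuousLinearMap_le _ _) ?_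
        refine mul_le_mul hboundC ?_ (Finset.prod_nonneg fun _ _ => norm_nonneg _)
          (le_max_right _ _)
        rw [Finset.prod_const]
        simp only [Finset.card_univ, Fintype.card_fin]
        exact pow_le_pow_left₀ (norm_nonneg _) hnorm_e i
    _ = max C 0 * c ^ (β - i) := by
        rw [Real.rpow_sub hc, Real.rpow_natCast, div_eq_mul_inv, inv_pow]
        ring

lemma ennreal_sum_rpow_le {ι : Type*} (s : Finset ι) (f : ι → ℝ≥0∞) {r : ℝ}
    (hr : 0 < r) (hr1 : r ≤ 1) : (∑ i ∈ s, f i) ^ r ≤ ∑ i ∈ s, f i ^ r := by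
  classical
  induction s using Finset.induction with
  | empty => simp [ENNReal.zero_rpow_of_pos hr]
  | insert _ _ hi ih =>
    rw [Finset.sum_insert hi, Finset.sum_insert hi]
    exact le_trans (ENNReal.rpow_add_le_add_rpow _ _ hr.le hr1) (add_le_add_right ih _)

lemma engine (d : ℕ) (D : Set (EuclideanSpace ℝ (Fin d))) (hD : IsOpen D)
    (hD0 : ∀ x ∈ D, x ≠ (0 : EuclideanSpace ℝ (Fin d)))
    (hDb : ∀ x ∈ D, bdist d D x ≤ ‖x‖)
    (hDbpos : ∀ x ∈ D, 0 < bdist d D x)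
    (p β : ℝ) (hp : 1 < p) (m : ℕ)
    (w : EuclideanSpace ℝ (Fin d) → ℝ) (hw : ContinuousOn w D) (hw0 : ∀ x ∈ D, 0 ≤ w x) :
    ∃ N : ℝ, 1 ≤ N ∧ ∀ u : EuclideanSpace ℝ (Fin d) → ℝ, ContDiffOn ℝ (m : ℕ∞) u D →
      ∑ k ∈ Finset.range (m + 1),
        (∫⁻ x in D, ENNReal.ofReal ((bdist d D x ^ k *
            ‖iteratedFDerivWithin ℝ k (fun y => ‖y‖ ^ β * u y) D x‖) ^ p * w x)) ^ (1 / p)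
      ≤ ENNReal.ofReal N *
        ∑ k ∈ Finset.range (m + 1),
        (∫⁻ x in D, ENNReal.ofReal ((bdist d D x ^ k *
            ‖iteratedFDerivWithin ℝ k u D x‖) ^ p * (‖x‖ ^ (β * p) * w x))) ^ (1 / p) := by
  classical
  set K : ℕ → ℝ := fun j => (normRpow_deriv_bound d β j).choose with hKdef
  have hK0 : ∀ j, 0 ≤ K j := fun j => (normRpow_deriv_bound d β j).choose_spec.1
  have hK : ∀ (j : ℕ) (x : EuclideanSpace ℝ (Fin d)), x ≠ 0 →
      ‖iteratedFDeriv ℝ j (fun y : EuclideanSpace ℝ (Fin d) => ‖y‖ ^ β) x‖ ≤ K j * ‖x‖ ^ (β - j) :=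
    fun j => (normRpow_deriv_bound d β j).choose_spec.2
  set C₀ : ℝ := ∑ j ∈ Finset.range (m + 1), (2:ℝ) ^ m * (K j + 1) with hC₀def
  have hC₀ : 0 ≤ C₀ :=
    Finset.sum_nonneg fun j _ => mul_nonneg (by positivity) (by linarith [hK0 j])
  set C₁ : ℝ := (C₀ + 1) * (m + 1 : ℝ) with hC₁def
  have hC₁ : 1 ≤ C₁ := by
    have : (1:ℝ) ≤ (m+1:ℝ) := by exact_mod_cast Nat.one_le_iff_ne_zero.2 (Nat.succ_ne_zero m)
    nlinarith
  have hp0 : (0:ℝ) < p := lt_trans zero_lt_one hp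
  refine ⟨(m + 1 : ℝ) * C₁, by nlinarith, fun u hu => ?_⟩
  have hDu : UniqueDiffOn ℝ D := hD.uniqueDiffOn
  have hmeas : MeasurableSet D := hD.measurableSet
  have hβcd : ContDiffOn ℝ (m : ℕ∞) (fun y : EuclideanSpace ℝ (Fin d) => ‖y‖ ^ β) D := fun x hx =>
    (normRpow_contDiffAt β (hD0 x hx)).contDiffWithinAt
  -- the pointwise derivative bound
  have hpoint : ∀ x ∈ D, ∀ k, k ≤ m →
      bdist d D x ^ k * ‖iteratedFDerivWithin ℝ k (fun y => ‖y‖ ^ β * u y) D x‖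
        ≤ (C₀ + 1) * (‖x‖ ^ β *
            ∑ i ∈ Finset.range (m + 1),
              bdist d D x ^ i * ‖iteratedFDerivWithin ℝ i u D x‖) := by
    intro x hx k hk
    have hxn : (0:ℝ) < ‖x‖ := norm_pos_iff.2 (hD0 x hx)
    have hρ0 : (0:ℝ) ≤ bdist d D x := Metric.infDist_nonneg
    set S : ℝ := ∑ i ∈ Finset.range (m + 1),
        bdist d D x ^ i * ‖iteratedFDerivWithin ℝ i u D x‖ with hSdef
    have hS0 : 0 ≤ S := Finset.sum_nonneg fun i _ =>
      mul_nonneg (pow_nonneg hρ0 _) (norm_nonneg _)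
    have hmul := norm_iteratedFDerivWithin_mul_le (𝕜 := ℝ) hβcd hu hDu hx
      (n := k) (by exact_mod_cast hk)
    have hterm : ∀ j ∈ Finset.range (k + 1),
        bdist d D x ^ k * ((k.choose j : ℝ) *
            ‖iteratedFDerivWithin ℝ j (fun y : EuclideanSpace ℝ (Fin d) => ‖y‖ ^ β) D x‖ *
            ‖iteratedFDerivWithin ℝ (k - j) u D x‖)
          ≤ (2:ℝ) ^ m * (K j + 1) * (‖x‖ ^ β * S) := by
      intro j hj
      rw [Finset.mem_range, Nat.lt_succ_iff] at hj
      have hρk : bdist d D x ^ k = bdist d D x ^ j * bdist d D x ^ (k - j) := by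
        rw [← pow_add, Nat.add_sub_cancel' hj]
      have hchoose : (k.choose j : ℝ) ≤ (2:ℝ) ^ m := by
        have h1 : k.choose j ≤ 2 ^ k := by
          rw [← Nat.sum_range_choose k]
          exact Finset.single_le_sum (f := fun i => k.choose i)
            (fun i _ => Nat.zero_le _) (Finset.mem_range.2 (Nat.lt_succ_of_le hj))
        have h2 : (2:ℕ) ^ k ≤ 2 ^ m := Nat.pow_le_pow_right (by norm_num) hk
        exact_mod_cast le_trans h1 h2
      have hf2 : bdist d D x ^ j *
          ‖iteratedFDerivWithin ℝ j (fun y : EuclideanSpace ℝ (Fin d) => ‖y‖ ^ β) D x‖ ≤ (K j + 1) * ‖x‖ ^ β := by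
        have hKx : ‖iteratedFDerivWithin ℝ j (fun y : EuclideanSpace ℝ (Fin d) => ‖y‖ ^ β) D x‖
            ≤ K j * ‖x‖ ^ (β - j) := by
          rw [iteratedFDerivWithin_of_isOpen j hD hx]
          exact hK j x (hD0 x hx)
        have hst : bdist d D x ^ j * ‖x‖ ^ (β - (j:ℕ)) ≤ ‖x‖ ^ β := by
          have h1 : bdist d D x ^ j ≤ ‖x‖ ^ j :=
            pow_le_pow_left₀ hρ0 (hDb x hx) j
          calc bdist d D x ^ j * ‖x‖ ^ (β - (j:ℕ))
              ≤ ‖x‖ ^ j * ‖x‖ ^ (β - (j:ℕ)) :=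
                mul_le_mul_of_nonneg_right h1 (Real.rpow_nonneg hxn.le _)
            _ = ‖x‖ ^ β := by
                rw [← Real.rpow_natCast ‖x‖ j, ← Real.rpow_add hxn]
                ring_nf
        calc bdist d D x ^ j * ‖iteratedFDerivWithin ℝ j (fun y : EuclideanSpace ℝ (Fin d) => ‖y‖ ^ β) D x‖
            ≤ bdist d D x ^ j * (K j * ‖x‖ ^ (β - (j:ℕ))) :=
              mul_le_mul_of_nonneg_left hKx (pow_nonneg hρ0 _)
          _ = K j * (bdist d D x ^ j * ‖x‖ ^ (β - (j:ℕ))) := by ring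
          _ ≤ K j * ‖x‖ ^ β := mul_le_mul_of_nonneg_left hst (hK0 j)
          _ ≤ (K j + 1) * ‖x‖ ^ β := by
              have := Real.rpow_nonneg hxn.le β
              nlinarith
      have hf3 : bdist d D x ^ (k - j) * ‖iteratedFDerivWithin ℝ (k - j) u D x‖ ≤ S := by
        refine Finset.single_le_sum (f := fun i =>
          bdist d D x ^ i * ‖iteratedFDerivWithin ℝ i u D x‖)
          (fun i _ => mul_nonneg (pow_nonneg hρ0 _) (norm_nonneg _)) ?_
        exact Finset.mem_range.2 (Nat.lt_succ_of_le (le_trans (Nat.sub_le k j) hk))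
      calc bdist d D x ^ k * ((k.choose j : ℝ) *
            ‖iteratedFDerivWithin ℝ j (fun y : EuclideanSpace ℝ (Fin d) => ‖y‖ ^ β) D x‖ *
            ‖iteratedFDerivWithin ℝ (k - j) u D x‖)
          = (k.choose j : ℝ) *
              ((bdist d D x ^ j * ‖iteratedFDerivWithin ℝ j (fun y : EuclideanSpace ℝ (Fin d) => ‖y‖ ^ β) D x‖) *
               (bdist d D x ^ (k - j) * ‖iteratedFDerivWithin ℝ (k - j) u D x‖)) := by
            rw [hρk]; ring
        _ ≤ (2:ℝ) ^ m * (((K j + 1) * ‖x‖ ^ β) * S) := by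
            refine mul_le_mul hchoose ?_ ?_ (by positivity)
            · refine mul_le_mul hf2 hf3 (mul_nonneg (pow_nonneg hρ0 _) (norm_nonneg _)) ?_
              exact mul_nonneg (by linarith [hK0 j]) (Real.rpow_nonneg (norm_nonneg x) β)
            · exact mul_nonneg (mul_nonneg (pow_nonneg hρ0 _) (norm_nonneg _))
                (mul_nonneg (pow_nonneg hρ0 _) (norm_nonneg _))
        _ = (2:ℝ) ^ m * (K j + 1) * (‖x‖ ^ β * S) := by ring
    calc bdist d D x ^ k * ‖iteratedFDerivWithin ℝ k (fun y => ‖y‖ ^ β * u y) D x‖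
        ≤ bdist d D x ^ k * ∑ j ∈ Finset.range (k + 1), (k.choose j : ℝ) *
            ‖iteratedFDerivWithin ℝ j (fun y : EuclideanSpace ℝ (Fin d) => ‖y‖ ^ β) D x‖ *
            ‖iteratedFDerivWithin ℝ (k - j) u D x‖ :=
          mul_le_mul_of_nonneg_left hmul (pow_nonneg hρ0 _)
      _ = ∑ j ∈ Finset.range (k + 1), bdist d D x ^ k * ((k.choose j : ℝ) *
            ‖iteratedFDerivWithin ℝ j (fun y : EuclideanSpace ℝ (Fin d) => ‖y‖ ^ β) D x‖ *
            ‖iteratedFDerivWithin ℝ (k - j) u D x‖) := Finset.mul_sum _ _ _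
      _ ≤ ∑ j ∈ Finset.range (k + 1), (2:ℝ) ^ m * (K j + 1) * (‖x‖ ^ β * S) :=
          Finset.sum_le_sum hterm
      _ ≤ ∑ j ∈ Finset.range (m + 1), (2:ℝ) ^ m * (K j + 1) * (‖x‖ ^ β * S) := by
          refine Finset.sum_le_sum_of_subset_of_nonneg
            (Finset.range_subset_range.2 (Nat.succ_le_succ hk)) fun j _ _ =>
              mul_nonneg (mul_nonneg (by positivity) (by linarith [hK0 j]))
                (mul_nonneg (Real.rpow_nonneg (norm_nonneg x) β) hS0)
      _ = C₀ * (‖x‖ ^ β * S) := by rw [hC₀def, Finset.sum_mul]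
      _ ≤ (C₀ + 1) * (‖x‖ ^ β * S) := by nlinarith [mul_nonneg (Real.rpow_nonneg (norm_nonneg x) β) hS0]
  -- abbreviations
  set a : ℕ → EuclideanSpace ℝ (Fin d) → ℝ := fun i x =>
    bdist d D x ^ i * ‖iteratedFDerivWithin ℝ i u D x‖ with hadef
  set J : ℕ → ℝ≥0∞ := fun i =>
    ∫⁻ x in D, ENNReal.ofReal ((a i x) ^ p * (‖x‖ ^ (β * p) * w x)) with hJdef
  -- measurability of the RHS integrands
  have hAEM : ∀ i, i ≤ m → AEMeasurable
      (fun x => ENNReal.ofReal ((a i x) ^ p * (‖x‖ ^ (β * p) * w x)))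
      (volume.restrict D) := by
    intro i hi
    have h1 : ContinuousOn (a i) D := by
      refine ContinuousOn.mul ?_ ?_
      · exact ((Metric.continuous_infDist_pt (frontier D)).pow i).continuousOn
      · exact (hu.continuousOn_iteratedFDerivWithin (by exact_mod_cast hi) hDu).norm
    have h2 : ContinuousOn (fun x : EuclideanSpace ℝ (Fin d) =>
        (a i x) ^ p * (‖x‖ ^ (β * p) * w x)) D := by
      refine (h1.rpow_const fun x _ => Or.inr hp0.le).mul (ContinuousOn.mul ?_ hw)
      exact continuous_norm.continuousOn.rpow_const fun x hx =>
        Or.inl (norm_ne_zero_iff.2 (hD0 x hx))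
    exact (ENNReal.continuous_ofReal.comp_continuousOn h2).aemeasurable hmeas
  -- per-k integral bound
  have hTk : ∀ k, k ≤ m →
      (∫⁻ x in D, ENNReal.ofReal ((bdist d D x ^ k *
          ‖iteratedFDerivWithin ℝ k (fun y => ‖y‖ ^ β * u y) D x‖) ^ p * w x))
        ≤ ENNReal.ofReal (C₁ ^ p) * ∑ i ∈ Finset.range (m + 1), J i := by
    intro k hk
    have hpt : ∀ x ∈ D,
        ENNReal.ofReal ((bdist d D x ^ k *
            ‖iteratedFDerivWithin ℝ k (fun y => ‖y‖ ^ β * u y) D x‖) ^ p * w x)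
          ≤ ENNReal.ofReal (C₁ ^ p) * ∑ i ∈ Finset.range (m + 1),
              ENNReal.ofReal ((a i x) ^ p * (‖x‖ ^ (β * p) * w x)) := by
      intro x hx
      have hxn : (0:ℝ) < ‖x‖ := norm_pos_iff.2 (hD0 x hx)
      have hρ0 : (0:ℝ) ≤ bdist d D x := Metric.infDist_nonneg
      set S : ℝ := ∑ i ∈ Finset.range (m + 1), a i x with hSdef
      have ha0 : ∀ i, 0 ≤ a i x := fun i =>
        mul_nonneg (pow_nonneg hρ0 _) (norm_nonneg _)
      have hS0 : 0 ≤ S := Finset.sum_nonneg fun i _ => ha0 i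
      have hxβ : (0:ℝ) ≤ ‖x‖ ^ β := Real.rpow_nonneg (norm_nonneg x) β
      -- S ^ p ≤ (m+1)^p * ∑ (a i x)^p
      have hSp : S ^ p ≤ (m + 1 : ℝ) ^ p * ∑ i ∈ Finset.range (m + 1), (a i x) ^ p := by
        obtain ⟨i₀, hi₀mem, hi₀⟩ := Finset.exists_mem_eq_sup'
          (Finset.nonempty_range_add_one (n := m)) (fun i => a i x)
        have hle : S ≤ (m + 1 : ℝ) * a i₀ x := by
          have := Finset.sum_le_card_nsmul (Finset.range (m + 1)) (fun i => a i x)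
            (a i₀ x) (fun i hi => hi₀ ▸ Finset.le_sup' (fun i => a i x) hi)
          simpa [Finset.card_range, nsmul_eq_mul] using this
        calc S ^ p ≤ ((m + 1 : ℝ) * a i₀ x) ^ p :=
              Real.rpow_le_rpow hS0 hle hp0.le
          _ = (m + 1 : ℝ) ^ p * (a i₀ x) ^ p :=
              Real.mul_rpow (by positivity) (ha0 i₀)
          _ ≤ (m + 1 : ℝ) ^ p * ∑ i ∈ Finset.range (m + 1), (a i x) ^ p := by
              refine mul_le_mul_of_nonneg_left ?_ (by positivity)
              exact Finset.single_le_sum (f := fun i => (a i x) ^ p)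
                (fun i _ => Real.rpow_nonneg (ha0 i) p) hi₀mem
      have hreal : (bdist d D x ^ k *
            ‖iteratedFDerivWithin ℝ k (fun y => ‖y‖ ^ β * u y) D x‖) ^ p * w x
          ≤ C₁ ^ p * ∑ i ∈ Finset.range (m + 1), (a i x) ^ p * (‖x‖ ^ (β * p) * w x) := by
        have hA := hpoint x hx k hk
        have h1 : (bdist d D x ^ k *
              ‖iteratedFDerivWithin ℝ k (fun y => ‖y‖ ^ β * u y) D x‖) ^ p
            ≤ ((C₀ + 1) * (‖x‖ ^ β * S)) ^ p :=
          Real.rpow_le_rpow (mul_nonneg (pow_nonneg hρ0 _) (norm_nonneg _)) hA hp0.le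
        have h2 : ((C₀ + 1) * (‖x‖ ^ β * S)) ^ p
            = (C₀ + 1) ^ p * (‖x‖ ^ (β * p) * S ^ p) := by
          rw [Real.mul_rpow (by linarith) (mul_nonneg hxβ hS0),
            Real.mul_rpow hxβ hS0, Real.rpow_mul (norm_nonneg x)]
        have h3 : (C₀ + 1) ^ p * (‖x‖ ^ (β * p) * S ^ p)
            ≤ C₁ ^ p * (‖x‖ ^ (β * p) * ∑ i ∈ Finset.range (m + 1), (a i x) ^ p) := by
          have hxβp : (0:ℝ) ≤ ‖x‖ ^ (β * p) := Real.rpow_nonneg (norm_nonneg x) _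
          have hC₁p : C₁ ^ p = (C₀ + 1) ^ p * (m + 1 : ℝ) ^ p := by
            rw [hC₁def, Real.mul_rpow (by linarith) (by positivity)]
          rw [hC₁p]
          calc (C₀ + 1) ^ p * (‖x‖ ^ (β * p) * S ^ p)
              ≤ (C₀ + 1) ^ p * (‖x‖ ^ (β * p) *
                  ((m + 1 : ℝ) ^ p * ∑ i ∈ Finset.range (m + 1), (a i x) ^ p)) := by
                refine mul_le_mul_of_nonneg_left
                  (mul_le_mul_of_nonneg_left hSp hxβp) ?_
                positivity
            _ = (C₀ + 1) ^ p * (m + 1 : ℝ) ^ p *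
                (‖x‖ ^ (β * p) * ∑ i ∈ Finset.range (m + 1), (a i x) ^ p) := by ring
        calc (bdist d D x ^ k *
              ‖iteratedFDerivWithin ℝ k (fun y => ‖y‖ ^ β * u y) D x‖) ^ p * w x
            ≤ C₁ ^ p * (‖x‖ ^ (β * p) *
                ∑ i ∈ Finset.range (m + 1), (a i x) ^ p) * w x := by
              refine mul_le_mul_of_nonneg_right (le_trans h1 (le_trans (le_of_eq h2) h3))
                (hw0 x hx)
          _ = C₁ ^ p * ∑ i ∈ Finset.range (m + 1), (a i x) ^ p * (‖x‖ ^ (β * p) * w x) := by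
              simp only [Finset.mul_sum, Finset.sum_mul]
              exact Finset.sum_congr rfl fun i _ => by ring
      calc ENNReal.ofReal ((bdist d D x ^ k *
            ‖iteratedFDerivWithin ℝ k (fun y => ‖y‖ ^ β * u y) D x‖) ^ p * w x)
          ≤ ENNReal.ofReal (C₁ ^ p *
              ∑ i ∈ Finset.range (m + 1), (a i x) ^ p * (‖x‖ ^ (β * p) * w x)) :=
            ENNReal.ofReal_le_ofReal hreal
        _ = ENNReal.ofReal (C₁ ^ p) * ENNReal.ofReal
              (∑ i ∈ Finset.range (m + 1), (a i x) ^ p * (‖x‖ ^ (β * p) * w x)) := by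
            rw [ENNReal.ofReal_mul (by positivity)]
        _ = ENNReal.ofReal (C₁ ^ p) * ∑ i ∈ Finset.range (m + 1),
              ENNReal.ofReal ((a i x) ^ p * (‖x‖ ^ (β * p) * w x)) := by
            rw [ENNReal.ofReal_sum_of_nonneg
              (f := fun i => (a i x) ^ p * (‖x‖ ^ (β * p) * w x))
              (fun i _ => mul_nonneg (Real.rpow_nonneg (ha0 i) p)
                (mul_nonneg (Real.rpow_nonneg (norm_nonneg x) _) (hw0 x hx)))]
    calc (∫⁻ x in D, ENNReal.ofReal ((bdist d D x ^ k *
          ‖iteratedFDerivWithin ℝ k (fun y => ‖y‖ ^ β * u y) D x‖) ^ p * w x))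
        ≤ ∫⁻ x in D, ENNReal.ofReal (C₁ ^ p) * ∑ i ∈ Finset.range (m + 1),
            ENNReal.ofReal ((a i x) ^ p * (‖x‖ ^ (β * p) * w x)) :=
          setLIntegral_mono' hmeas hpt
      _ = ENNReal.ofReal (C₁ ^ p) * ∫⁻ x in D, ∑ i ∈ Finset.range (m + 1),
            ENNReal.ofReal ((a i x) ^ p * (‖x‖ ^ (β * p) * w x)) :=
          lintegral_const_mul' _ _ ENNReal.ofReal_ne_top
      _ = ENNReal.ofReal (C₁ ^ p) * ∑ i ∈ Finset.range (m + 1), J i := by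
          rw [lintegral_finset_sum' _ fun i hi =>
            hAEM i (Nat.lt_succ_iff.1 (Finset.mem_range.1 hi))]
  -- assemble
  have h1p0 : (0:ℝ) < 1 / p := by positivity
  have h1p1 : (1:ℝ) / p ≤ 1 := by
    rw [div_le_one hp0]; exact hp.le
  calc ∑ k ∈ Finset.range (m + 1),
        (∫⁻ x in D, ENNReal.ofReal ((bdist d D x ^ k *
            ‖iteratedFDerivWithin ℝ k (fun y => ‖y‖ ^ β * u y) D x‖) ^ p * w x)) ^ (1 / p)
      ≤ ∑ k ∈ Finset.range (m + 1),
        (ENNReal.ofReal (C₁ ^ p) * ∑ i ∈ Finset.range (m + 1), J i) ^ (1 / p) := by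
        refine Finset.sum_le_sum fun k hk => ?_
        exact ENNReal.rpow_le_rpow (hTk k (Nat.lt_succ_iff.1 (Finset.mem_range.1 hk))) h1p0.le
    _ = (m + 1 : ℝ≥0∞) *
        (ENNReal.ofReal (C₁ ^ p) * ∑ i ∈ Finset.range (m + 1), J i) ^ (1 / p) := by
        rw [Finset.sum_const, Finset.card_range, nsmul_eq_mul]
        norm_cast
    _ ≤ (m + 1 : ℝ≥0∞) * (ENNReal.ofReal C₁ *
        ∑ i ∈ Finset.range (m + 1), (J i) ^ (1 / p)) := by
        refine mul_le_mul_of_nonneg_left ?_ zero_le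
        rw [ENNReal.mul_rpow_of_nonneg _ _ h1p0.le]
        refine mul_le_mul ?_ (ennreal_sum_rpow_le _ _ h1p0 h1p1) zero_le zero_le
        rw [← ENNReal.ofReal_rpow_of_nonneg (by linarith) hp0.le, ← ENNReal.rpow_mul,
          mul_one_div_cancel hp0.ne', ENNReal.rpow_one]
    _ = ENNReal.ofReal ((m + 1 : ℝ) * C₁) *
        ∑ i ∈ Finset.range (m + 1), (J i) ^ (1 / p) := by
        rw [← mul_assoc, ENNReal.ofReal_mul (show (0:ℝ) ≤ (m:ℝ) + 1 by positivity)]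
        congr 2
        rw [show ((m:ℝ) + 1) = ((m + 1 : ℕ) : ℝ) by push_cast; ring, ENNReal.ofReal_natCast]
        push_cast
        ring



/-- On a conic domain `D = D(M) ⊆ ℝ^d`, `d ≥ 2`, for `p ∈ (1,∞)`,
`θ, Θ ∈ ℝ`, `m ∈ ℕ`, there is `N ≥ 1` (depending only on `d, p, m, θ, Θ, M`) such that
for every `f ∈ C^m(D)`,
`N⁻¹ ‖f‖_{K^m_{p,θ,Θ}(D)} ≤ ‖ρ∘^((θ−Θ)/p) f‖_{K^m_{p,Θ,Θ}(D)} ≤ N ‖f‖_{K^m_{p,θ,Θ}(D)}`;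
i.e. the norm of `f` in `K^m_{p,θ,Θ}(D)` is equivalent to the purely
boundary-weighted norm of `ρ∘^((θ−Θ)/p) f`. -/
theorem stmt_5 (d : ℕ) (hd : 2 ≤ d) (M : Set (EuclideanSpace ℝ (Fin d)))
    (hMne : M.Nonempty)
    (hMs : M ⊆ Metric.sphere (0 : EuclideanSpace ℝ (Fin d)) 1)
    (hMopen : ∃ U : Set (EuclideanSpace ℝ (Fin d)),
      IsOpen U ∧ M = U ∩ Metric.sphere (0 : EuclideanSpace ℝ (Fin d)) 1)
    (hMproper : ¬ Metric.sphere (0 : EuclideanSpace ℝ (Fin d)) 1 ⊆ closure M)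
    (p θ Θ : ℝ) (hp : 1 < p) (m : ℕ) :
    ∃ N : ℝ, 1 ≤ N ∧ ∀ f : EuclideanSpace ℝ (Fin d) → ℝ,
      ContDiffOn ℝ (m : ℕ∞) f (conicDomain d M) →
      (ENNReal.ofReal N)⁻¹ * Knorm d (conicDomain d M) p θ Θ m f ≤
          Knorm d (conicDomain d M) p Θ Θ m (fun x => ‖x‖ ^ ((θ - Θ) / p) * f x) ∧
        Knorm d (conicDomain d M) p Θ Θ m (fun x => ‖x‖ ^ ((θ - Θ) / p) * f x) ≤
          ENNReal.ofReal N * Knorm d (conicDomain d M) p θ Θ m f := by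
  classical
  obtain ⟨U, hU, hMU⟩ := hMopen
  set D : Set (EuclideanSpace ℝ (Fin d)) := conicDomain d M with hDdef
  have hp0 : (0:ℝ) < p := lt_trans zero_lt_one hp
  have hD0 : ∀ x ∈ D, x ≠ (0 : EuclideanSpace ℝ (Fin d)) := fun x hx => hx.1
  -- D is open
  have hDopen : IsOpen D := by
    have hEq : D = {x : EuclideanSpace ℝ (Fin d) | x ≠ 0} ∩
        (fun x : EuclideanSpace ℝ (Fin d) => ‖x‖⁻¹ • x) ⁻¹' U := by
      ext x
      simp only [hDdef, conicDomain, Set.mem_setOf_eq, Set.mem_inter_iff, Set.mem_preimage,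
        hMU, Set.mem_inter_iff]
      constructor
      · rintro ⟨hx0, hxU, -⟩; exact ⟨hx0, hxU⟩
      · rintro ⟨hx0, hxU⟩
        refine ⟨hx0, hxU, ?_⟩
        have hxn : ‖x‖ ≠ 0 := norm_ne_zero_iff.2 hx0
        simp only [Metric.mem_sphere, dist_zero_right, norm_smul, norm_inv, norm_norm]
        exact inv_mul_cancel₀ hxn
    rw [hEq]
    refine ContinuousOn.isOpen_inter_preimage ?_ isOpen_compl_singleton hU
    exact ((continuous_norm.continuousOn.inv₀ fun x hx =>
      norm_ne_zero_iff.2 hx).smul continuousOn_id)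
  -- a point of M gives points of D near 0
  obtain ⟨y₀, hy₀M⟩ := hMne
  have hy₀s : ‖y₀‖ = 1 := by
    have := hMs hy₀M
    simpa [Metric.mem_sphere, dist_zero_right] using this
  have hy₀0 : y₀ ≠ 0 := by
    intro h; rw [h] at hy₀s; simp at hy₀s
  have hmemD : ∀ t : ℝ, 0 < t → t • y₀ ∈ D := by
    intro t ht
    refine ⟨smul_ne_zero ht.ne' hy₀0, ?_⟩
    have : ‖t • y₀‖ = t := by
      rw [norm_smul, hy₀s, mul_one, Real.norm_eq_abs, abs_of_pos ht]
    rw [this, smul_smul, inv_mul_cancel₀ ht.ne', one_smul]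
    exact hy₀M
  have h0f : (0 : EuclideanSpace ℝ (Fin d)) ∈ frontier D := by
    rw [frontier, hDopen.interior_eq]
    constructor
    · have htend : Filter.Tendsto (fun n : ℕ => ((n:ℝ) + 1)⁻¹ • y₀) Filter.atTop
          (nhds (0 : EuclideanSpace ℝ (Fin d))) := by
        have h1 : Filter.Tendsto (fun n : ℕ => ((n:ℝ) + 1)⁻¹) Filter.atTop (nhds (0:ℝ)) := by
          simpa [one_div] using (tendsto_one_div_add_atTop_nhds_zero_nat :
            Filter.Tendsto (fun n : ℕ => 1 / ((n : ℝ) + 1)) Filter.atTop (nhds 0))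
        simpa using h1.smul_const y₀
      exact mem_closure_of_tendsto htend
        (Filter.Eventually.of_forall fun n => hmemD _ (by positivity))
    · intro h
      exact hD0 0 h rfl
  have hDb : ∀ x ∈ D, bdist d D x ≤ ‖x‖ := by
    intro x _
    have := Metric.infDist_le_dist_of_mem (x := x) h0f
    simpa [bdist, dist_zero_right] using this
  have hDbpos : ∀ x ∈ D, 0 < bdist d D x := by
    intro x hx
    rw [bdist, ← isClosed_frontier.notMem_iff_infDist_pos ⟨0, h0f⟩]
    intro hmem
    rw [frontier, hDopen.interior_eq] at hmem
    exact hmem.2 hx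
  have hmeas : MeasurableSet D := hDopen.measurableSet
  have hαp : (θ - Θ) / p * p = θ - Θ := div_mul_cancel₀ _ hp0.ne'
  -- continuity of the weights
  have hwc : ContinuousOn (fun x : EuclideanSpace ℝ (Fin d) =>
      bdist d D x ^ (Θ - (d:ℝ))) D := by
    refine ContinuousOn.rpow_const ?_ fun x hx => Or.inl (hDbpos x hx).ne'
    exact (Metric.continuous_infDist_pt (frontier D)).continuousOn
  have hwc1 : ContinuousOn (fun x : EuclideanSpace ℝ (Fin d) =>
      ‖x‖ ^ (θ - Θ) * bdist d D x ^ (Θ - (d:ℝ))) D := by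
    refine ContinuousOn.mul ?_ hwc
    exact continuous_norm.continuousOn.rpow_const fun x hx =>
      Or.inl (norm_ne_zero_iff.2 (hD0 x hx))
  obtain ⟨N₂, hN₂1, hN₂⟩ := engine d D hDopen hD0 hDb hDbpos p ((θ - Θ) / p) hp m
    (fun x => bdist d D x ^ (Θ - (d:ℝ))) hwc
    (fun x _ => Real.rpow_nonneg Metric.infDist_nonneg _)
  obtain ⟨N₁, hN₁1, hN₁⟩ := engine d D hDopen hD0 hDb hDbpos p (-((θ - Θ) / p)) hp m
    (fun x => ‖x‖ ^ (θ - Θ) * bdist d D x ^ (Θ - (d:ℝ))) hwc1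
    (fun x _ => mul_nonneg (Real.rpow_nonneg (norm_nonneg x) _)
      (Real.rpow_nonneg Metric.infDist_nonneg _))
  refine ⟨max N₁ N₂, le_trans hN₁1 (le_max_left _ _), fun f hf => ?_⟩
  have hN0 : (0:ℝ) < max N₁ N₂ := lt_of_lt_of_le zero_lt_one (le_trans hN₁1 (le_max_left _ _))
  set g : EuclideanSpace ℝ (Fin d) → ℝ := fun x => ‖x‖ ^ ((θ - Θ) / p) * f x with hgdef
  have hαcd : ContDiffOn ℝ (m : ℕ∞) (fun y : EuclideanSpace ℝ (Fin d) =>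
      ‖y‖ ^ ((θ - Θ) / p)) D := fun x hx =>
    (normRpow_contDiffAt _ (hD0 x hx)).contDiffWithinAt
  have hg : ContDiffOn ℝ (m : ℕ∞) g D := hαcd.mul hf
  -- direction 2 : Knorm Θ Θ g ≤ N₂ * Knorm θ Θ f
  have hdir2 : Knorm d D p Θ Θ m g ≤ ENNReal.ofReal N₂ * Knorm d D p θ Θ m f := by
    have h := hN₂ f hf
    have hL : Knorm d D p Θ Θ m g = ∑ k ∈ Finset.range (m + 1),
        (∫⁻ x in D, ENNReal.ofReal ((bdist d D x ^ k *
            ‖iteratedFDerivWithin ℝ k (fun y => ‖y‖ ^ ((θ - Θ) / p) * f y) D x‖) ^ p *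
            (bdist d D x ^ (Θ - (d:ℝ))))) ^ (1 / p) := by
      refine Finset.sum_congr rfl fun k _ => ?_
      congr 1
      refine lintegral_congr fun x => ?_
      rw [sub_self, Real.rpow_zero, one_mul]
    have hR : Knorm d D p θ Θ m f = ∑ k ∈ Finset.range (m + 1),
        (∫⁻ x in D, ENNReal.ofReal ((bdist d D x ^ k *
            ‖iteratedFDerivWithin ℝ k f D x‖) ^ p *
            (‖x‖ ^ ((θ - Θ) / p * p) * bdist d D x ^ (Θ - (d:ℝ))))) ^ (1 / p) := by
      rw [hαp]; rfl
    rw [hL, hR]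
    exact h
  -- direction 1 : Knorm θ Θ f ≤ N₁ * Knorm Θ Θ g
  have hdir1 : Knorm d D p θ Θ m f ≤ ENNReal.ofReal N₁ * Knorm d D p Θ Θ m g := by
    have h := hN₁ g hg
    have hEqOn : Set.EqOn (fun y : EuclideanSpace ℝ (Fin d) =>
        ‖y‖ ^ (-((θ - Θ) / p)) * g y) f D := by
      intro y hy
      have hyn : (0:ℝ) < ‖y‖ := norm_pos_iff.2 (hD0 y hy)
      simp only [hgdef]
      rw [← mul_assoc, ← Real.rpow_add hyn, neg_add_cancel, Real.rpow_zero, one_mul]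
    have hL : ∑ k ∈ Finset.range (m + 1),
        (∫⁻ x in D, ENNReal.ofReal ((bdist d D x ^ k *
            ‖iteratedFDerivWithin ℝ k (fun y => ‖y‖ ^ (-((θ - Θ) / p)) * g y) D x‖) ^ p *
            (‖x‖ ^ (θ - Θ) * bdist d D x ^ (Θ - (d:ℝ))))) ^ (1 / p)
        = Knorm d D p θ Θ m f := by
      refine Finset.sum_congr rfl fun k _ => ?_
      congr 1
      refine setLIntegral_congr_fun hmeas (fun x hx => ?_)
      rw [iteratedFDerivWithin_congr hEqOn hx k]
    have hR : ∑ k ∈ Finset.range (m + 1),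
        (∫⁻ x in D, ENNReal.ofReal ((bdist d D x ^ k *
            ‖iteratedFDerivWithin ℝ k g D x‖) ^ p *
            (‖x‖ ^ (-((θ - Θ) / p) * p) * (‖x‖ ^ (θ - Θ) *
              bdist d D x ^ (Θ - (d:ℝ)))))) ^ (1 / p)
        = Knorm d D p Θ Θ m g := by
      refine Finset.sum_congr rfl fun k _ => ?_
      congr 1
      refine setLIntegral_congr_fun hmeas (fun x hx => ?_)
      have hxn : (0:ℝ) < ‖x‖ := norm_pos_iff.2 (hD0 x hx)
      have hwx : ‖x‖ ^ (-((θ - Θ) / p) * p) * (‖x‖ ^ (θ - Θ) *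
          bdist d D x ^ (Θ - (d:ℝ))) = ‖x‖ ^ (Θ - Θ) * bdist d D x ^ (Θ - (d:ℝ)) := by
        rw [neg_mul, hαp, ← mul_assoc, ← Real.rpow_add hxn, neg_add_cancel, sub_self]
      rw [hwx]
    rw [← hL, ← hR]
    exact h
  constructor
  · have h1 : Knorm d D p θ Θ m f ≤ ENNReal.ofReal (max N₁ N₂) * Knorm d D p Θ Θ m g :=
      le_trans hdir1 (mul_le_mul_left (ENNReal.ofReal_le_ofReal (le_max_left _ _)) _)
    calc (ENNReal.ofReal (max N₁ N₂))⁻¹ * Knorm d D p θ Θ m f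
        ≤ (ENNReal.ofReal (max N₁ N₂))⁻¹ *
            (ENNReal.ofReal (max N₁ N₂) * Knorm d D p Θ Θ m g) :=
          mul_le_mul_right h1 _
      _ = Knorm d D p Θ Θ m g := by
          rw [← mul_assoc, ENNReal.inv_mul_cancel
            (ENNReal.ofReal_pos.2 hN0).ne' ENNReal.ofReal_ne_top, one_mul]
  · exact le_trans hdir2 (mul_le_mul_left
      (ENNReal.ofReal_le_ofReal (le_max_right _ _)) _)
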